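/- (Koszul F5 criterion) Let F₁,…,F_k ∈ K[S_Δ^h] be homogeneous of multidegrees d₁,…,d_k and d ≥ d_k. If x^(α, d−d_k) is the leading monomial of some element of ⟨F₁,…,F_{k−1}⟩_{d−d_k}, then the polynomial x^(α, d−d_k)·F_k is a K-linear combination of elements of ⟨F₁,…,F_{k−1}⟩_d together with polynomials x^(β, d−d_k)·F_k where x^(β,d−d_k) ranges over monomials of K[S_Δ^h]_{d−d_k} smaller than x^(α,d−d_k). -/

import Mathlib

/-- `m` is the leading monomial of `f` with respect to the monomial order `lt`. -/
def IsLM {K : Type} [Field K] {M : Type} [AddCommMonoid M]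
    (lt : M → M → Prop) (f : AddMonoidAlgebra K M) (m : M) : Prop :=
  m ∈ f.coeff.support ∧ ∀ m' ∈ f.coeff.support, m' = m ∨ lt m' m

/-- Koszul F5 criterion: if x^(α,d−d_k) is the leading monomial of some
element of ⟨F₁,…,F_{k−1}⟩_{d−d_k}, then x^(α,d−d_k)·F_k is a K-linear combination of
elements of ⟨F₁,…,F_{k−1}⟩_d and of products x^(β,d−d_k)·F_k with x^(β,d−d_k) smaller
than x^(α,d−d_k). -/
theorem stmt10 (K : Type) [Field K] (n r k : ℕ)
    (S : AddSubmonoid ((Fin n → ℤ) × (Fin r → ℕ))) (hSfg : S.FG)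
    (lt : ((Fin n → ℤ) × (Fin r → ℕ)) → ((Fin n → ℤ) × (Fin r → ℕ)) → Prop)
    (htotal : ∀ a ∈ S, ∀ b ∈ S, a = b ∨ lt a b ∨ lt b a)
    (hirrefl : ∀ a, ¬ lt a a)
    (htrans : ∀ a b c, lt a b → lt b c → lt a c)
    (hmin : ∀ a ∈ S, a ≠ (0 : ((Fin n → ℤ) × (Fin r → ℕ))) → lt 0 a)
    (hadd : ∀ a ∈ S, ∀ b ∈ S, ∀ c ∈ S, lt a b → lt (a + c) (b + c))
    -- F₁, …, F_{k-1}
    (F : Fin k → AddMonoidAlgebra K ((Fin n → ℤ) × (Fin r → ℕ)))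
    (dF : Fin k → (Fin r → ℕ))
    (hFhom : ∀ i, ∀ p ∈ (F i).coeff.support, p.2 = dF i)
    (hFS : ∀ i, ∀ p ∈ (F i).coeff.support, p ∈ S)
    -- F_k of multidegree d_k
    (Fk : AddMonoidAlgebra K ((Fin n → ℤ) × (Fin r → ℕ))) (dk : Fin r → ℕ)
    (hFkhom : ∀ p ∈ Fk.coeff.support, p.2 = dk)
    (hFkS : ∀ p ∈ Fk.coeff.support, p ∈ S)
    -- d ≥ d_k coordinatewise, with e = d − d_k
    (e d : Fin r → ℕ) (hd : d = e + dk)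
    (α : Fin n → ℤ) (hαS : (α, e) ∈ S)
    -- x^(α,e) is a leading monomial of ⟨F₁,…,F_{k−1}⟩_{d−d_k}
    (hLM : ∃ G : AddMonoidAlgebra K ((Fin n → ℤ) × (Fin r → ℕ)),
      G ≠ 0 ∧ (∀ p ∈ G.coeff.support, p.2 = e) ∧
      (∃ H : Fin k → AddMonoidAlgebra K ((Fin n → ℤ) × (Fin r → ℕ)),
        (∀ i, ∀ p ∈ (H i).coeff.support, p ∈ S) ∧ G = ∑ i, H i * F i) ∧
      IsLM lt G ((α, e) : (Fin n → ℤ) × (Fin r → ℕ))) :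
    AddMonoidAlgebra.single ((α, e) : (Fin n → ℤ) × (Fin r → ℕ)) (1 : K) * Fk ∈
      Submodule.span K
        ({g : AddMonoidAlgebra K ((Fin n → ℤ) × (Fin r → ℕ)) |
            (∀ p ∈ g.coeff.support, p.2 = d) ∧
            ∃ H : Fin k → AddMonoidAlgebra K ((Fin n → ℤ) × (Fin r → ℕ)),
              (∀ i, ∀ p ∈ (H i).coeff.support, p ∈ S) ∧ g = ∑ i, H i * F i} ∪
          {g | ∃ β : Fin n → ℤ, (β, e) ∈ S ∧
            lt ((β, e) : (Fin n → ℤ) × (Fin r → ℕ)) ((α, e)) ∧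
            g = AddMonoidAlgebra.single ((β, e) : (Fin n → ℤ) × (Fin r → ℕ)) (1 : K) * Fk}) := by
  classical
  obtain ⟨G, hG0, hGe, ⟨H, hHS, hGsum⟩, hLMmem, hLMmax⟩ := hLM
  set m₀ : (Fin n → ℤ) × (Fin r → ℕ) := (α, e) with hm₀
  have hcne : G.coeff m₀ ≠ 0 := Finsupp.mem_support_iff.mp hLMmem
  -- supports of G lie in S
  have hGS : ∀ p ∈ G.coeff.support, p ∈ S := by
    intro p hp
    rw [hGsum, AddMonoidAlgebra.coeff_sum] at hp
    have hp2 := Finsupp.support_finset_sum hp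
    obtain ⟨i, _, hi⟩ := Finset.mem_biUnion.mp hp2
    obtain ⟨a, ha, b, hb, rfl⟩ := Finset.mem_add.mp (AddMonoidAlgebra.support_coeff_mul_subset _ _ hi)
    exact S.add_mem (hHS i a ha) (hFS i b hb)
  -- decomposition of G * Fk
  have hG : G * Fk = ∑ m ∈ G.coeff.support, G.coeff m • (AddMonoidAlgebra.single m (1 : K) * Fk) := by
    conv_lhs => rw [← AddMonoidAlgebra.sum_coeff_single G]
    rw [Finsupp.sum, Finset.sum_mul]
    refine Finset.sum_congr rfl fun m _ => ?_
    rw [← smul_mul_assoc, AddMonoidAlgebra.smul_single, smul_eq_mul, mul_one]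
  have key : AddMonoidAlgebra.single m₀ (1 : K) * Fk =
      (G.coeff m₀)⁻¹ • (G * Fk - ∑ m ∈ G.coeff.support.erase m₀,
        G.coeff m • (AddMonoidAlgebra.single m (1 : K) * Fk)) := by
    rw [hG, ← Finset.add_sum_erase _ _ hLMmem, add_sub_cancel_right, smul_smul,
      inv_mul_cancel₀ hcne, one_smul]
  rw [key]
  apply Submodule.smul_mem
  apply Submodule.sub_mem
  · refine Submodule.subset_span (Or.inl ⟨?_, fun i => Fk * H i, ?_, ?_⟩)
    · intro p hp
      obtain ⟨a, ha, b, hb, rfl⟩ := Finset.mem_add.mp (AddMonoidAlgebra.support_coeff_mul_subset _ _ hp)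
      show a.2 + b.2 = d
      rw [hGe a ha, hFkhom b hb, hd]
    · intro i p hp
      obtain ⟨a, ha, b, hb, rfl⟩ := Finset.mem_add.mp (AddMonoidAlgebra.support_coeff_mul_subset _ _ hp)
      exact S.add_mem (hFkS a ha) (hHS i b hb)
    · rw [hGsum, Finset.sum_mul]
      exact Finset.sum_congr rfl fun i _ => by ring
  · refine Submodule.sum_mem _ fun m hm => Submodule.smul_mem _ _ ?_
    have hmem : m ∈ G.coeff.support := Finset.mem_of_mem_erase hm
    have hme : m.2 = e := hGe m hmem
    have hmeq : m = (m.1, e) := by rw [← hme]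
    have hlt : lt m m₀ := by
      rcases hLMmax m hmem with h | h
      · exact absurd h (Finset.ne_of_mem_erase hm)
      · exact h
    refine Submodule.subset_span (Or.inr ⟨m.1, ?_, ?_, ?_⟩)
    · rw [← hmeq]; exact hGS m hmem
    · rw [← hmeq]; exact hlt
    · rw [← hmeq]
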